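/- Let G be the learned feature set at the end of the first experiment and set δ = max over v ∈ S ∖ G of h(v; G), which is strictly positive. Then for every J > γ/(δ·n), the test accuracy of the warm-started model is strictly less than that of the cold-started model: ACC(L_warm^(J)) < ACC(L_cold^(J)). -/

import Mathlib

open Finset

/-- Number of data points in `N` whose feature set contains the feature `v`. -/
def featCount {F X : Type} [DecidableEq F] (feats : X → Finset F)
    (N : Finset X) (v : F) : ℕ :=
  (N.filter fun x => v ∈ feats x).card

/-- `g(v; T, N)`: the frequency of feature `v` among the data points of `N`,
normalized by the size of the full training set `T`. -/
noncomputable def gval {F X : Type} [DecidableEq F] (feats : X → Finset F)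
    (T N : Finset X) (v : F) : ℝ :=
  (featCount feats N v : ℝ) / (T.card : ℝ)

/-- The set of data points of `T` with nonzero gradient: not memorized (not in
`M`) and not well-classified by the learned set `L` (fewer than `τ` of their
features are learned). -/
def active {F X : Type} [DecidableEq F] [DecidableEq X] (feats : X → Finset F) (τ : ℕ)
    (L : Finset F) (M T : Finset X) : Finset X :=
  (T \ M).filter fun x => ((feats x) ∩ L).card < τ

/-- The learned set after the first `i` steps of a run `us` starting from `L0`. -/
def learnedAfter {F : Type} [DecidableEq F] (L0 : Finset F) (us : List F)
    (i : ℕ) : Finset F :=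
  L0 ∪ (us.take i).toFinset

/-- `us` is a valid greedy training run on the dataset `T` with initially
memorized set `M`, starting from the learned set `L0`; `S` is the set of all
features, `τ` the well-classification threshold and `γ` the noise strength.
At every step the model picks a not-yet-learned feature of maximal frequency
`g` among the active (nonzero-gradient) data points; it is learned if its
frequency is at least `γ/|T|`, and at the end of the run every remaining
unlearned feature has frequency below `γ/|T|` (the remaining active points are
then memorized). -/
structure IsRun {F X : Type} [DecidableEq F] [DecidableEq X] (S : Finset F)
    (feats : X → Finset F) (τ : ℕ) (γ : ℝ) (T M : Finset X)
    (L0 : Finset F) (us : List F) : Prop where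
  mem : ∀ i (h : i < us.length), us.get ⟨i, h⟩ ∈ S \ learnedAfter L0 us i
  maximal : ∀ i (h : i < us.length), ∀ u ∈ S \ learnedAfter L0 us i,
    gval feats T (active feats τ (learnedAfter L0 us i) M T) u ≤
      gval feats T (active feats τ (learnedAfter L0 us i) M T) (us.get ⟨i, h⟩)
  threshold : ∀ i (h : i < us.length),
    γ / (T.card : ℝ) ≤
      gval feats T (active feats τ (learnedAfter L0 us i) M T) (us.get ⟨i, h⟩)
  stopped : ∀ u ∈ S \ learnedAfter L0 us us.length,
    gval feats T (active feats τ (learnedAfter L0 us us.length) M T) u <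
      γ / (T.card : ℝ)

/-- The memorized set after a run: the previously memorized points together
with all points that are still active (not well-classified) at the end of the
run. -/
def finalM {F X : Type} [DecidableEq F] [DecidableEq X] (feats : X → Finset F) (τ : ℕ)
    (T M : Finset X) (L0 : Finset F) (us : List F) : Finset X :=
  M ∪ active feats τ (L0 ∪ us.toFinset) M T

/-- The cumulative dataset `T_{1:j}`, the union of the first `j` chunks. -/
def cumT {X : Type} [DecidableEq X] (chunk : ℕ → Finset X) (j : ℕ) : Finset X :=
  (Finset.Icc 1 j).biUnion chunk

/-- `h(v; L)`: the fraction of data points (of one chunk) containing `v` that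
are not well-classified by the learned set `L`. -/
noncomputable def hval {F : Type} [DecidableEq F] (C : ℕ) (Sc : Fin C → Finset F)
    (nA : Fin C → Finset F → ℕ) (τ n : ℕ) (v : F) (L : Finset F) : ℝ :=
  (1 / (n : ℝ)) * ∑ c : Fin C, ∑ A ∈ (Sc c).powerset,
    (nA c A : ℝ) * (if v ∈ A ∧ (A ∩ L).card < τ then 1 else 0)

/-- The test accuracy of a learned feature set `L`. -/
noncomputable def ACC {F : Type} [DecidableEq F] (C : ℕ) (Sc : Fin C → Finset F)
    (nA : Fin C → Finset F → ℕ) (τ n : ℕ) (L : Finset F) : ℝ :=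
  1 - ((C : ℝ) - 1) / (C : ℝ) * ((1 / (n : ℝ)) *
    ∑ c : Fin C, ∑ A ∈ (Sc c).powerset,
      (nA c A : ℝ) * (if (A ∩ L).card < τ then 1 else 0))

section AuxLemmas
open Finset List
variable {F X : Type} [DecidableEq F] [DecidableEq X]

def cnt (C : ℕ) {F : Type} (Sc : Fin C → Finset F) (nA : Fin C → Finset F → ℕ)
    (p : Fin C → Finset F → Prop) [∀ c A, Decidable (p c A)] : ℕ :=
  ∑ c : Fin C, ∑ A ∈ (Sc c).powerset, nA c A * (if p c A then 1 else 0)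

lemma count_chunk {C : ℕ} {Sc : Fin C → Finset F} {label : X → Fin C}
    {feats : X → Finset F} {nA : Fin C → Finset F → ℕ} {chunk : ℕ → Finset X}
    (hfeats : ∀ x, feats x ⊆ Sc (label x))
    (hcount : ∀ j, 1 ≤ j → ∀ c : Fin C, ∀ A ∈ (Sc c).powerset,
      ((chunk j).filter fun x => label x = c ∧ feats x = A).card = nA c A)
    (j : ℕ) (hj : 1 ≤ j) (p : Fin C → Finset F → Prop) [∀ c A, Decidable (p c A)] :
    ((chunk j).filter fun x => p (label x) (feats x)).card = cnt C Sc nA p := by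
  classical
  have h1 : ((chunk j).filter fun x => p (label x) (feats x)).card
      = ∑ c : Fin C, (((chunk j).filter fun x => p (label x) (feats x)).filter
          fun x => label x = c).card :=
    Finset.card_eq_sum_card_fiberwise (fun x _ => mem_univ _)
  rw [h1]
  refine Finset.sum_congr rfl fun c _ => ?_
  have h2 : (((chunk j).filter fun x => p (label x) (feats x)).filter
        fun x => label x = c).card
      = ∑ A ∈ (Sc c).powerset, ((((chunk j).filter fun x => p (label x) (feats x)).filter
          fun x => label x = c).filter fun x => feats x = A).card := by
    refine Finset.card_eq_sum_card_fiberwise fun x hx => ?_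
    rw [Finset.mem_coe, Finset.mem_filter] at hx
    rw [Finset.mem_coe, mem_powerset, ← hx.2]
    exact hfeats x
  rw [h2]
  refine Finset.sum_congr rfl fun A hA => ?_
  by_cases hp : p c A
  · rw [if_pos hp, mul_one, ← hcount j hj c A hA]
    congr 1
    ext x
    simp only [Finset.mem_filter, and_assoc]
    constructor
    · rintro ⟨hx, _, h1, h2⟩; exact ⟨hx, h1, h2⟩
    · rintro ⟨hx, h1, h2⟩; exact ⟨hx, by rw [h1, h2]; exact hp, h1, h2⟩
  · rw [if_neg hp, mul_zero, Finset.card_eq_zero, Finset.eq_empty_iff_forall_notMem]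
    intro x hx
    simp only [Finset.mem_filter, and_assoc] at hx
    obtain ⟨-, hpx, h1, h2⟩ := hx
    rw [h1, h2] at hpx
    exact absurd hpx hp

lemma count_cumT {C : ℕ} {Sc : Fin C → Finset F} {label : X → Fin C}
    {feats : X → Finset F} {nA : Fin C → Finset F → ℕ} {chunk : ℕ → Finset X}
    (hfeats : ∀ x, feats x ⊆ Sc (label x))
    (hcount : ∀ j, 1 ≤ j → ∀ c : Fin C, ∀ A ∈ (Sc c).powerset,
      ((chunk j).filter fun x => label x = c ∧ feats x = A).card = nA c A)
    (hchunkdisj : ∀ j j', j ≠ j' → Disjoint (chunk j) (chunk j'))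
    (J : ℕ) (p : Fin C → Finset F → Prop) [∀ c A, Decidable (p c A)] :
    ((cumT chunk J).filter fun x => p (label x) (feats x)).card = J * cnt C Sc nA p := by
  classical
  unfold cumT
  rw [Finset.filter_biUnion, Finset.card_biUnion (fun i hi i' hi' hne =>
    Finset.disjoint_filter_filter (hchunkdisj i i' hne))]
  rw [Finset.sum_congr rfl (fun i hi => count_chunk hfeats hcount i (mem_Icc.mp hi).1 p)]
  simp [Nat.card_Icc]

lemma card_cumT {chunk : ℕ → Finset X} {n : ℕ}
    (hchunkdisj : ∀ j j', j ≠ j' → Disjoint (chunk j) (chunk j'))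
    (hchunkcard : ∀ j, 1 ≤ j → (chunk j).card = n) (J : ℕ) :
    (cumT chunk J).card = J * n := by
  classical
  unfold cumT
  rw [Finset.card_biUnion (fun i hi i' hi' hne => hchunkdisj i i' hne)]
  rw [Finset.sum_congr rfl (fun i hi => hchunkcard i (mem_Icc.mp hi).1)]
  simp [Nat.card_Icc]

lemma hval_cnt {C : ℕ} (Sc : Fin C → Finset F) (nA : Fin C → Finset F → ℕ)
    (τ n : ℕ) (v : F) (L : Finset F) :
    hval C Sc nA τ n v L
      = (cnt C Sc nA (fun c A => v ∈ A ∧ (A ∩ L).card < τ) : ℝ) / (n : ℝ) := by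
  have hc : ((cnt C Sc nA (fun c A => v ∈ A ∧ (A ∩ L).card < τ) : ℕ) : ℝ)
      = ∑ c : Fin C, ∑ A ∈ (Sc c).powerset,
          (nA c A : ℝ) * (if v ∈ A ∧ (A ∩ L).card < τ then 1 else 0) := by
    unfold cnt
    push_cast
    rfl
  unfold hval
  rw [hc, one_div_mul_eq_div]

lemma ACC_cnt {C : ℕ} (Sc : Fin C → Finset F) (nA : Fin C → Finset F → ℕ)
    (τ n : ℕ) (L : Finset F) :
    ACC C Sc nA τ n L
      = 1 - ((C : ℝ) - 1) / (C : ℝ) *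
          ((cnt C Sc nA (fun c A => (A ∩ L).card < τ) : ℝ) / (n : ℝ)) := by
  have hc : ((cnt C Sc nA (fun c A => (A ∩ L).card < τ) : ℕ) : ℝ)
      = ∑ c : Fin C, ∑ A ∈ (Sc c).powerset,
          (nA c A : ℝ) * (if (A ∩ L).card < τ then 1 else 0) := by
    unfold cnt
    push_cast
    rfl
  unfold ACC
  rw [one_div_mul_eq_div, hc]

end AuxLemmas
section Aux2
open Finset List
variable {F X : Type} [DecidableEq F] [DecidableEq X]

set_option linter.unusedSectionVars false

lemma gval_active_eq {C : ℕ} {Sc : Fin C → Finset F} {label : X → Fin C}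
    {feats : X → Finset F} {nA : Fin C → Finset F → ℕ} {chunk : ℕ → Finset X} {τ n : ℕ}
    (hfeats : ∀ x, feats x ⊆ Sc (label x))
    (hcount : ∀ j, 1 ≤ j → ∀ c : Fin C, ∀ A ∈ (Sc c).powerset,
      ((chunk j).filter fun x => label x = c ∧ feats x = A).card = nA c A)
    (hchunkdisj : ∀ j j', j ≠ j' → Disjoint (chunk j) (chunk j'))
    (hchunkcard : ∀ j, 1 ≤ j → (chunk j).card = n)
    (J : ℕ) (hJ : 1 ≤ J) (L : Finset F) (v : F) :
    gval feats (cumT chunk J) (active feats τ L ∅ (cumT chunk J)) v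
      = hval C Sc nA τ n v L := by
  classical
  have h1 : featCount feats (active feats τ L ∅ (cumT chunk J)) v
      = ((cumT chunk J).filter fun x =>
          (fun c A => v ∈ A ∧ (A ∩ L).card < τ) (label x) (feats x)).card := by
    unfold featCount active
    rw [sdiff_empty, Finset.filter_filter]
    congr 1
    apply Finset.filter_congr
    intro x _
    constructor
    · rintro ⟨h1, h2⟩; exact ⟨h2, h1⟩
    · rintro ⟨h1, h2⟩; exact ⟨h2, h1⟩
  rw [gval, h1, count_cumT hfeats hcount hchunkdisj J (fun c A => v ∈ A ∧ (A ∩ L).card < τ),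
    card_cumT hchunkdisj hchunkcard J, hval_cnt]
  have hJ0 : (J : ℝ) ≠ 0 := Nat.cast_ne_zero.mpr (by omega)
  push_cast
  rw [mul_div_mul_left _ _ hJ0]

lemma gval_chunk_eq {C : ℕ} {Sc : Fin C → Finset F} {label : X → Fin C}
    {feats : X → Finset F} {nA : Fin C → Finset F → ℕ} {chunk : ℕ → Finset X} {τ n : ℕ}
    (hfeats : ∀ x, feats x ⊆ Sc (label x))
    (hcount : ∀ j, 1 ≤ j → ∀ c : Fin C, ∀ A ∈ (Sc c).powerset,
      ((chunk j).filter fun x => label x = c ∧ feats x = A).card = nA c A)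
    (hchunkcard : ∀ j, 1 ≤ j → (chunk j).card = n)
    (hτpos : 0 < τ) (j : ℕ) (hj : 1 ≤ j) (v : F) :
    gval feats (chunk j) (chunk j) v = hval C Sc nA τ n v ∅ := by
  classical
  have h1 : featCount feats (chunk j) v
      = ((chunk j).filter fun x =>
          (fun c A => v ∈ A ∧ (A ∩ (∅ : Finset F)).card < τ) (label x) (feats x)).card := by
    unfold featCount
    congr 1
    apply Finset.filter_congr
    intro x _
    simp [hτpos]
  rw [gval, h1, count_chunk hfeats hcount j hj (fun c A => v ∈ A ∧ (A ∩ (∅ : Finset F)).card < τ), hchunkcard j hj, hval_cnt]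

lemma hval_class {C : ℕ} {Sc : Fin C → Finset F} (nA : Fin C → Finset F → ℕ)
    (τ n : ℕ) (hdisjS : ∀ c c', c ≠ c' → Disjoint (Sc c) (Sc c'))
    {c : Fin C} {v : F} (hv : v ∈ Sc c) (L : Finset F) :
    hval C Sc nA τ n v L = hval C Sc nA τ n v (L ∩ Sc c) := by
  unfold hval
  congr 1
  refine Finset.sum_congr rfl fun c' _ => Finset.sum_congr rfl fun A hA => ?_
  congr 1
  rw [mem_powerset] at hA
  by_cases hvA : v ∈ A
  · have hcc : c' = c := by
      by_contra hne
      exact absurd hv (Finset.disjoint_left.mp (hdisjS c' c hne) (hA hvA))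
    subst hcc
    have : A ∩ (L ∩ Sc c') = A ∩ L := by
      rw [← inter_assoc, inter_comm A L, inter_assoc, Finset.inter_eq_left.mpr hA, inter_comm L A]
    rw [this]
  · simp [hvA]

lemma hval_small {C : ℕ} {Sc : Fin C → Finset F} (nA : Fin C → Finset F → ℕ)
    {τ : ℕ} (n : ℕ) (hτpos : 0 < τ) (v : F) {W : Finset F} (hW : W.card < τ) :
    hval C Sc nA τ n v W = hval C Sc nA τ n v ∅ := by
  unfold hval
  congr 1
  refine Finset.sum_congr rfl fun c' _ => Finset.sum_congr rfl fun A hA => ?_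
  congr 1
  have h1 : (A ∩ W).card < τ := lt_of_le_of_lt (Finset.card_le_card inter_subset_right) hW
  simp [h1, hτpos]

end Aux2
section FGA
lemma filter_get_aux {α : Type} (p : α → Bool) :
    ∀ (l : List α) (k : ℕ) (hk : k < (l.filter p).length),
      ∃ (i : ℕ) (hi : i < l.length),
        l.get ⟨i, hi⟩ = (l.filter p).get ⟨k, hk⟩ ∧
        (l.take i).filter p = (l.filter p).take k := by
  intro l
  induction l with
  | nil => intro k hk; simp at hk
  | cons x t ih =>
    intro k hk
    by_cases hx : p x
    · cases k with
      | zero =>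
        refine ⟨0, by simp, ?_, by simp⟩
        simp [List.get, List.filter_cons, hx]
      | succ k =>
        have hk' : k < (t.filter p).length := by
          have := hk; simp only [List.filter_cons, hx, if_true, List.length_cons] at this
          omega
        obtain ⟨i, hi, h1, h2⟩ := ih k hk'
        refine ⟨i + 1, by simp; omega, ?_, ?_⟩
        · simpa [List.get, List.filter_cons, hx] using h1
        · simp only [List.take_succ_cons, List.filter_cons, hx, if_true, h2]
    · have hk' : k < (t.filter p).length := by
        have := hk; simp only [List.filter_cons, hx] at this ⊢
        simpa using this
      obtain ⟨i, hi, h1, h2⟩ := ih k hk'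
      refine ⟨i + 1, by simp; omega, ?_, ?_⟩
      · have hl : List.filter p (x :: t) = List.filter p t := by
          simp [List.filter_cons, hx]
        simp only [List.get_eq_getElem] at h1 ⊢
        rw [List.getElem_cons_succ, List.getElem_of_eq hl, h1]
      · simp only [List.take_succ_cons, List.filter_cons, hx, h2]
        simp [List.filter_cons, hx]
end FGA
section Aux3
open Finset List
variable {F : Type} [DecidableEq F]

set_option linter.unusedSectionVars false
set_option maxHeartbeats 1000000

lemma toFinset_filter_mem (l : List F) (s : Finset F) :
    (l.filter (fun z => decide (z ∈ s))).toFinset = l.toFinset ∩ s := by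
  ext z
  simp [List.mem_filter]

lemma greedy_compare {C : ℕ} {Sc : Fin C → Finset F} {S : Finset F}
    (hS : S = Finset.univ.biUnion Sc)
    (h : F → Finset F → ℝ)
    (hcongr : ∀ (c : Fin C) (v : F) (L L' : Finset F), v ∈ Sc c →
      L ∩ Sc c = L' ∩ Sc c → h v L = h v L')
    (hinj : ∀ L : Finset F, L ⊆ S → ∀ c : Fin C, ∀ v₁ ∈ Sc c, ∀ v₂ ∈ Sc c,
      h v₁ L = h v₂ L → v₁ = v₂)
    (θa θb : ℝ) (hθ : θb ≤ θa) (a b : List F)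
    (Hamem : ∀ i (hi : i < a.length), a.get ⟨i, hi⟩ ∈ S \ (a.take i).toFinset)
    (Hathresh : ∀ i (hi : i < a.length), θa ≤ h (a.get ⟨i, hi⟩) (a.take i).toFinset)
    (Hamax : ∀ i (hi : i < a.length), ∀ u ∈ S \ (a.take i).toFinset,
      h u (a.take i).toFinset ≤ h (a.get ⟨i, hi⟩) (a.take i).toFinset)
    (Hbmem : ∀ i (hi : i < b.length), b.get ⟨i, hi⟩ ∈ S \ (b.take i).toFinset)
    (Hbmax : ∀ i (hi : i < b.length), ∀ u ∈ S \ (b.take i).toFinset,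
      h u (b.take i).toFinset ≤ h (b.get ⟨i, hi⟩) (b.take i).toFinset)
    (Hbstop : ∀ u ∈ S \ b.toFinset, h u b.toFinset < θb) :
    a.toFinset ⊆ b.toFinset := by
  classical
  have hbS : b.toFinset ⊆ S := by
    intro z hz
    obtain ⟨i, rfl⟩ := List.mem_iff_get.mp (List.mem_toFinset.mp hz)
    exact (mem_sdiff.mp (Hbmem i.1 i.2)).1
  intro x hxa
  have hxS : x ∈ S := by
    obtain ⟨i, rfl⟩ := List.mem_iff_get.mp (List.mem_toFinset.mp hxa)
    exact (mem_sdiff.mp (Hamem i.1 i.2)).1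
  obtain ⟨c, -, hxc⟩ := mem_biUnion.mp (hS ▸ hxS)
  set pc : F → Bool := fun z => decide (z ∈ Sc c) with hpc
  set fa := a.filter pc with hfa
  set fb := b.filter pc with hfb
  -- matching of prefixes
  have matching : ∀ k, k ≤ fa.length → k ≤ fb.length → fa.take k = fb.take k := by
    intro k
    induction k with
    | zero => simp
    | succ k ihk =>
      intro hka hkb
      have hka' : k < fa.length := hka
      have hkb' : k < fb.length := hkb
      have ih : fa.take k = fb.take k := ihk (le_of_lt hka') (le_of_lt hkb')
      obtain ⟨i, hi, hgi, hti⟩ := filter_get_aux pc a k hka'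
      obtain ⟨j, hj, hgj, htj⟩ := filter_get_aux pc b k hkb'
      set y := fa.get ⟨k, hka'⟩ with hy
      set z := fb.get ⟨k, hkb'⟩ with hz
      -- class membership
      have hyc : y ∈ Sc c := by
        have hmem : y ∈ fa := by rw [hy]; exact List.get_mem _ _
        have := List.mem_filter.mp (hfa ▸ hmem)
        simpa [hpc] using this.2
      have hzc : z ∈ Sc c := by
        have hmem : z ∈ fb := by rw [hz]; exact List.get_mem _ _
        have := List.mem_filter.mp (hfb ▸ hmem)
        simpa [hpc] using this.2
      -- the common class-restricted learned set
      have hWa : (a.take i).toFinset ∩ Sc c = (fa.take k).toFinset := by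
        rw [← toFinset_filter_mem, hti]
      have hWb : (b.take j).toFinset ∩ Sc c = (fa.take k).toFinset := by
        rw [← toFinset_filter_mem, htj, ← ih]
      have hyS : y ∈ S := by
        rw [← hgi]; exact (mem_sdiff.mp (Hamem i hi)).1
      have hzS : z ∈ S := by
        rw [← hgj]; exact (mem_sdiff.mp (Hbmem j hj)).1
      have hyna : y ∉ (a.take i).toFinset := by
        rw [← hgi]; exact (mem_sdiff.mp (Hamem i hi)).2
      have hznb : z ∉ (b.take j).toFinset := by
        rw [← hgj]; exact (mem_sdiff.mp (Hbmem j hj)).2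
      have hynW : y ∉ (fa.take k).toFinset := by
        intro hmem
        exact hyna (mem_of_mem_inter_left (hWa ▸ hmem : y ∈ (a.take i).toFinset ∩ Sc c))
      have hznW : z ∉ (fa.take k).toFinset := by
        intro hmem
        exact hznb (mem_of_mem_inter_left (hWb ▸ hmem : z ∈ (b.take j).toFinset ∩ Sc c))
      have hynb : y ∉ (b.take j).toFinset := by
        intro hmem
        exact hynW (hWb ▸ (mem_inter.mpr ⟨hmem, hyc⟩))
      have hzna : z ∉ (a.take i).toFinset := by
        intro hmem
        exact hznW (hWa ▸ (mem_inter.mpr ⟨hmem, hzc⟩))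
      -- inequalities
      have h1 : h y ((b.take j).toFinset) ≤ h z ((b.take j).toFinset) := by
        have := Hbmax j hj y (mem_sdiff.mpr ⟨hyS, hynb⟩)
        rwa [hgj] at this
      have h2 : h z ((a.take i).toFinset) ≤ h y ((a.take i).toFinset) := by
        have := Hamax i hi z (mem_sdiff.mpr ⟨hzS, hzna⟩)
        rwa [hgi] at this
      have e1 : h y ((a.take i).toFinset) = h y ((b.take j).toFinset) :=
        hcongr c y _ _ hyc (hWa.trans hWb.symm)
      have e2 : h z ((a.take i).toFinset) = h z ((b.take j).toFinset) :=
        hcongr c z _ _ hzc (hWa.trans hWb.symm)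
      have heq : h y ((b.take j).toFinset) = h z ((b.take j).toFinset) := by
        linarith
      have hbjS : (b.take j).toFinset ⊆ S := fun w hw =>
        hbS (List.mem_toFinset.mpr (List.mem_of_mem_take (List.mem_toFinset.mp hw)))
      have hyz : y = z := hinj _ hbjS c y hyc z hzc heq
      -- extend the prefix equality
      have hval' : fa[k] = fb[k] := by
        have h0 := hyz
        rw [hy, hz] at h0
        simpa using h0
      rw [List.take_succ, List.take_succ, ih, List.getElem?_eq_getElem hka',
        List.getElem?_eq_getElem hkb', hval']
  -- length comparison
  have hlen : fa.length ≤ fb.length := by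
    by_contra hlt
    push_neg at hlt
    set m := fb.length with hm
    have hma : m < fa.length := hlt
    have heq : fa.take m = fb := by
      rw [matching m (le_of_lt hma) le_rfl, List.take_length]
    obtain ⟨i, hi, hgi, hti⟩ := filter_get_aux pc a m hma
    set y := fa.get ⟨m, hma⟩ with hy
    have hyc : y ∈ Sc c := by
      have hmem : y ∈ fa := by rw [hy]; exact List.get_mem _ _
      have := List.mem_filter.mp (hfa ▸ hmem)
      simpa [hpc] using this.2
    have hyS : y ∈ S := by
      rw [← hgi]; exact (mem_sdiff.mp (Hamem i hi)).1
    have hyna : y ∉ (a.take i).toFinset := by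
      rw [← hgi]; exact (mem_sdiff.mp (Hamem i hi)).2
    have hWa : (a.take i).toFinset ∩ Sc c = b.toFinset ∩ Sc c := by
      rw [← toFinset_filter_mem, hti, heq, toFinset_filter_mem]
    have hynb : y ∉ b.toFinset := by
      intro hmem
      have : y ∈ (a.take i).toFinset ∩ Sc c := hWa ▸ (mem_inter.mpr ⟨hmem, hyc⟩)
      exact hyna (mem_of_mem_inter_left this)
    have hstop := Hbstop y (mem_sdiff.mpr ⟨hyS, hynb⟩)
    have hthr := Hathresh i hi
    rw [hgi] at hthr
    have e1 : h y ((a.take i).toFinset) = h y b.toFinset := hcongr c y _ _ hyc hWa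
    linarith
  -- conclude
  have hxfa : x ∈ fa.toFinset := by
    rw [hfa, toFinset_filter_mem]
    exact mem_inter.mpr ⟨hxa, hxc⟩
  have : fa = fb.take fa.length := by
    rw [← matching fa.length le_rfl hlen, List.take_length]
  have hxfb : x ∈ fb.toFinset := by
    rw [this] at hxfa
    exact List.mem_toFinset.mpr (List.mem_of_mem_take (List.mem_toFinset.mp hxfa))
  have := List.mem_filter.mp (List.mem_toFinset.mp hxfb)
  exact List.mem_toFinset.mpr this.1

end Aux3
open Finset
set_option maxHeartbeats 1600000 in
theorem warm_acc_lt_cold_acc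
    {F X : Type} [DecidableEq F] [DecidableEq X]
    (C K τ : ℕ) (γ : ℝ) (n : ℕ)
    (Sc : Fin C → Finset F) (label : X → Fin C) (feats : X → Finset F)
    (nA : Fin C → Finset F → ℕ) (chunk : ℕ → Finset X)
    (hγ : 0 < γ) (hτK : τ < K)
    (hK : ∀ c, (Sc c).card = K)
    (hdisjS : ∀ c c', c ≠ c' → Disjoint (Sc c) (Sc c'))
    (hfeats : ∀ x, feats x ⊆ Sc (label x))
    (hnA : ∀ c, ∀ A ∈ (Sc c).powerset, 1 ≤ nA c A)
    (hn : n = ∑ c : Fin C, ∑ A ∈ (Sc c).powerset, nA c A)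
    (hchunkdisj : ∀ j j', j ≠ j' → Disjoint (chunk j) (chunk j'))
    (hchunkcard : ∀ j, 1 ≤ j → (chunk j).card = n)
    (hcount : ∀ j, 1 ≤ j → ∀ c : Fin C, ∀ A ∈ (Sc c).powerset,
      ((chunk j).filter fun x => label x = c ∧ feats x = A).card = nA c A)
    (hC : 1 < C) (hτpos : 0 < τ)
    (hinj : ∀ L : Finset F, L ⊆ Finset.univ.biUnion Sc →
      ∀ c : Fin C, ∀ v₁ ∈ Sc c, ∀ v₂ ∈ Sc c,
        hval C Sc nA τ n v₁ L = hval C Sc nA τ n v₂ L → v₁ = v₂)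
    (hii : ∀ c : Fin C, ∃ v : Fin τ → F, Function.Injective v ∧ (∀ i, v i ∈ Sc c) ∧
      ∀ j, 1 ≤ j →
        ((∀ i : Fin τ, (i : ℕ) + 1 < τ →
            γ / (n : ℝ) ≤ gval feats (chunk j) (chunk j) (v i)) ∧
          gval feats (chunk j) (chunk j)
            (v ⟨τ - 1, Nat.sub_lt hτpos Nat.one_pos⟩) < γ / (n : ℝ)))
    (Lw : ℕ → Finset F) (Mw : ℕ → Finset X) (usw : ℕ → List F)
    (hLw0 : Lw 0 = ∅) (hMw0 : Mw 0 = ∅)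
    (hwarm : ∀ j : ℕ,
      IsRun (Finset.univ.biUnion Sc) feats τ γ (cumT chunk (j + 1)) (Mw j) (Lw j)
        (usw (j + 1)) ∧
      Lw (j + 1) = Lw j ∪ (usw (j + 1)).toFinset ∧
      Mw (j + 1) = finalM feats τ (cumT chunk (j + 1)) (Mw j) (Lw j) (usw (j + 1)))
    (usc : ℕ → List F)
    (hcold : ∀ j : ℕ,
      IsRun (Finset.univ.biUnion Sc) feats τ γ (cumT chunk (j + 1)) ∅ ∅ (usc (j + 1)))
    (δ : ℝ)
    (hδub : ∀ v ∈ Finset.univ.biUnion Sc \ Lw 1, hval C Sc nA τ n v (Lw 1) ≤ δ)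
    (hδmem : ∃ v ∈ Finset.univ.biUnion Sc \ Lw 1, hval C Sc nA τ n v (Lw 1) = δ) :
    0 < δ ∧
    ∀ J : ℕ, γ / (δ * (n : ℝ)) < (J : ℝ) →
      ACC C Sc nA τ n (Lw J) < ACC C Sc nA τ n ((usc J).toFinset) := by
  classical
  set S := Finset.univ.biUnion Sc with hSdef
  set G := Lw 1 with hGdef
  obtain ⟨hrun1, hLw1, hMw1⟩ := hwarm 0
  rw [hLw0] at hrun1 hLw1 hMw1
  rw [hMw0] at hrun1 hMw1
  simp only [Nat.zero_add] at hrun1 hLw1 hMw1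
  have hC0 : 0 < C := by omega
  have hnpos : 0 < n := by
    rw [hn]
    calc 1 ≤ nA ⟨0, hC0⟩ ∅ := hnA _ _ (by simp)
    _ ≤ ∑ A ∈ (Sc ⟨0, hC0⟩).powerset, nA ⟨0, hC0⟩ A :=
      Finset.single_le_sum (fun _ _ => Nat.zero_le _) (by simp)
    _ ≤ ∑ c : Fin C, ∑ A ∈ (Sc c).powerset, nA c A :=
      Finset.single_le_sum (f := fun c => ∑ A ∈ (Sc c).powerset, nA c A)
        (fun _ _ => Nat.zero_le _) (mem_univ _)
  have hnR : (0:ℝ) < (n : ℝ) := by exact_mod_cast hnpos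
  have hGfin : G = (usw 1).toFinset := by rw [hGdef, hLw1, Finset.empty_union]
  obtain ⟨v₀, hv₀S, hv₀δ⟩ := hδmem
  obtain ⟨hv₀Smem, hv₀G⟩ := Finset.mem_sdiff.mp hv₀S
  -- run-1 normalized facts
  have hcard1 : ((cumT chunk 1).card : ℝ) = (n : ℝ) := by
    rw [card_cumT hchunkdisj hchunkcard 1, one_mul]
  have bridge1 : ∀ (L : Finset F) (u : F),
      gval feats (cumT chunk 1) (active feats τ L ∅ (cumT chunk 1)) u
        = hval C Sc nA τ n u L :=
    fun L u => gval_active_eq hfeats hcount hchunkdisj hchunkcard 1 le_rfl L u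
  have la1 : ∀ i, learnedAfter ∅ (usw 1) i = ((usw 1).take i).toFinset := by
    intro i; simp [learnedAfter]
  have la1len : learnedAfter ∅ (usw 1) (usw 1).length = G := by
    rw [la1, List.take_length, ← hGfin]
  have H1 : ∀ u ∈ S \ G, hval C Sc nA τ n u G < γ / (n : ℝ) := by
    intro u hu
    have := hrun1.stopped u (by rwa [la1len])
    rwa [la1len, bridge1, hcard1] at this
  have Ramem : ∀ i (hi : i < (usw 1).length),
      (usw 1).get ⟨i, hi⟩ ∈ S \ ((usw 1).take i).toFinset := by
    intro i hi; have := hrun1.mem i hi; rwa [la1] at this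
  have Rathresh : ∀ i (hi : i < (usw 1).length),
      γ / (n : ℝ) ≤ hval C Sc nA τ n ((usw 1).get ⟨i, hi⟩) ((usw 1).take i).toFinset := by
    intro i hi; have := hrun1.threshold i hi; rwa [la1, bridge1, hcard1] at this
  have Ramax : ∀ i (hi : i < (usw 1).length), ∀ u ∈ S \ ((usw 1).take i).toFinset,
      hval C Sc nA τ n u ((usw 1).take i).toFinset
        ≤ hval C Sc nA τ n ((usw 1).get ⟨i, hi⟩) ((usw 1).take i).toFinset := by
    intro i hi u hu
    have := hrun1.maximal i hi u (by rwa [la1])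
    rwa [la1, bridge1, bridge1] at this
  -- delta facts
  have hδlt : δ < γ / (n : ℝ) := by rw [← hv₀δ]; exact H1 v₀ hv₀S
  obtain ⟨c₀, -, hv₀c⟩ := Finset.mem_biUnion.mp (hSdef ▸ hv₀Smem)
  have hδpos : 0 < δ := by
    rw [← hv₀δ, hval_cnt]
    have hcnt1 : 1 ≤ cnt C Sc nA (fun c A => v₀ ∈ A ∧ (A ∩ G).card < τ) := by
      have t1 : 1 ≤ nA c₀ {v₀} *
          (if v₀ ∈ ({v₀} : Finset F) ∧ (({v₀} : Finset F) ∩ G).card < τ then 1 else 0) := by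
        rw [if_pos ⟨Finset.mem_singleton_self v₀, by
          rw [Finset.singleton_inter_of_notMem hv₀G]; simpa using hτpos⟩, mul_one]
        exact hnA c₀ _ (by rwa [Finset.mem_powerset, Finset.singleton_subset_iff])
      calc 1 ≤ _ := t1
      _ ≤ ∑ A ∈ (Sc c₀).powerset, nA c₀ A *
            (if v₀ ∈ A ∧ (A ∩ G).card < τ then 1 else 0) :=
        Finset.single_le_sum
          (f := fun A => nA c₀ A * (if v₀ ∈ A ∧ (A ∩ G).card < τ then 1 else 0))
          (fun _ _ => Nat.zero_le _)
          (Finset.mem_powerset.mpr (Finset.singleton_subset_iff.mpr hv₀c))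
      _ ≤ cnt C Sc nA (fun c A => v₀ ∈ A ∧ (A ∩ G).card < τ) :=
        Finset.single_le_sum
          (f := fun c => ∑ A ∈ (Sc c).powerset, nA c A *
            (if v₀ ∈ A ∧ (A ∩ G).card < τ then 1 else 0))
          (fun _ _ => Nat.zero_le _) (mem_univ _)
    have : (0:ℝ) < (cnt C Sc nA (fun c A => v₀ ∈ A ∧ (A ∩ G).card < τ) : ℝ) := by
      exact_mod_cast hcnt1
    positivity
  -- warm stasis
  have hstasis : ∀ j, 1 ≤ j → Lw j = G ∧
      Mw j = (cumT chunk j).filter fun x => (feats x ∩ G).card < τ := by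
    intro j hj
    induction j, hj using Nat.le_induction with
    | base =>
      refine ⟨rfl, ?_⟩
      rw [hMw1]
      unfold finalM active
      rw [Finset.sdiff_empty, Finset.empty_union, ← hLw1]
    | succ j hj ih =>
      obtain ⟨hrun, hL, hM⟩ := hwarm j
      have hIcc : Finset.Icc 1 (j+1) = insert (j+1) (Finset.Icc 1 j) := by
        ext m; simp only [Finset.mem_Icc, Finset.mem_insert]; omega
      have hcumT : cumT chunk (j+1) = chunk (j+1) ∪ cumT chunk j := by
        unfold cumT; rw [hIcc, Finset.biUnion_insert]
      have hdisjc : Disjoint (chunk (j+1)) (cumT chunk j) := by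
        simp only [cumT, Finset.disjoint_biUnion_right]
        intro l hl
        exact hchunkdisj _ _ (by rw [Finset.mem_Icc] at hl; omega)
      have hact : active feats τ G (Mw j) (cumT chunk (j+1))
          = (chunk (j+1)).filter fun x => (feats x ∩ G).card < τ := by
        unfold active
        ext x
        simp only [Finset.mem_filter, Finset.mem_sdiff, hcumT, Finset.mem_union, ih.2]
        constructor
        · rintro ⟨⟨hx1 | hx1, hx2⟩, hx3⟩
          · exact ⟨hx1, hx3⟩
          · exact absurd ⟨hx1, hx3⟩ hx2
        · rintro ⟨hx1, hx2⟩
          refine ⟨⟨Or.inl hx1, fun hmem => ?_⟩, hx2⟩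
          exact Finset.disjoint_left.mp hdisjc hx1 hmem.1
      have hcardj1 : ((cumT chunk (j+1)).card : ℝ) = ((j:ℝ)+1) * (n:ℝ) := by
        rw [card_cumT hchunkdisj hchunkcard (j+1)]; push_cast; ring
      have hempty : usw (j+1) = [] := by
        by_contra hne
        have hlen : 0 < (usw (j+1)).length := List.length_pos_iff.mpr hne
        have hmem := hrun.mem 0 hlen
        have hthr := hrun.threshold 0 hlen
        have hla : learnedAfter (Lw j) (usw (j+1)) 0 = G := by
          simp [learnedAfter, ih.1]
        rw [hla] at hmem hthr
        set u := (usw (j+1)).get ⟨0, hlen⟩ with hu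
        have hfc : featCount feats
            ((chunk (j+1)).filter fun x => (feats x ∩ G).card < τ) u
            = cnt C Sc nA (fun c A => u ∈ A ∧ (A ∩ G).card < τ) := by
          unfold featCount
          rw [Finset.filter_filter,
            ← count_chunk hfeats hcount (j+1) (by omega)
              (fun c A => u ∈ A ∧ (A ∩ G).card < τ)]
          congr 1
          apply Finset.filter_congr
          intro x _
          constructor
          · rintro ⟨h1, h2⟩; exact ⟨h2, h1⟩
          · rintro ⟨h1, h2⟩; exact ⟨h2, h1⟩
        rw [hact] at hthr
        rw [gval, hfc, hcardj1] at hthr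
        have hpos : (0:ℝ) < ((j:ℝ)+1) * (n:ℝ) := by positivity
        have h5 : γ ≤ (cnt C Sc nA (fun c A => u ∈ A ∧ (A ∩ G).card < τ) : ℝ) :=
          (div_le_div_iff_of_pos_right hpos).mp hthr
        have h6 : γ / (n:ℝ) ≤ hval C Sc nA τ n u G := by
          rw [hval_cnt]
          exact (div_le_div_iff_of_pos_right hnR).mpr h5
        exact absurd h6 (not_le.mpr (H1 u hmem))
      constructor
      · rw [hL, hempty]; simp [ih.1]
      · rw [hM, hempty]
        unfold finalM
        simp only [List.toFinset_nil, Finset.union_empty]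
        rw [ih.1, hact, ih.2, ← Finset.filter_union]
        congr 1
        rw [hcumT, Finset.union_comm]
  -- the per-experiment comparison
  refine ⟨hδpos, ?_⟩
  intro J hJR
  have hδn : δ * (n:ℝ) < γ := by
    have := (lt_div_iff₀ hnR).mp hδlt
    linarith
  have hJb : (1:ℝ) < (J:ℝ) := by
    have h1 : (1:ℝ) < γ / (δ * (n:ℝ)) := by
      rw [lt_div_iff₀ (by positivity)]
      linarith
    linarith
  have hJ1 : 1 ≤ J := Nat.one_le_cast.mp (le_of_lt hJb)
  have hJRpos : (0:ℝ) < (J:ℝ) := by linarith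
  have hLJ : Lw J = G := (hstasis J hJ1).1
  -- cold run normalized facts
  have hcr := hcold (J-1)
  have hJm : J - 1 + 1 = J := by omega
  rw [hJm] at hcr
  set b := usc J with hb
  set Lc := b.toFinset with hLcdef
  have hcardJ : ((cumT chunk J).card : ℝ) = (J:ℝ) * (n:ℝ) := by
    rw [card_cumT hchunkdisj hchunkcard J]; push_cast; ring
  have bridgeJ : ∀ (L : Finset F) (u : F),
      gval feats (cumT chunk J) (active feats τ L ∅ (cumT chunk J)) u
        = hval C Sc nA τ n u L :=
    fun L u => gval_active_eq hfeats hcount hchunkdisj hchunkcard J hJ1 L u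
  have lab : ∀ i, learnedAfter ∅ b i = (b.take i).toFinset := by
    intro i; simp [learnedAfter]
  have lablen : learnedAfter ∅ b b.length = Lc := by
    rw [lab, List.take_length]
  have Rbmem : ∀ i (hi : i < b.length), b.get ⟨i, hi⟩ ∈ S \ (b.take i).toFinset := by
    intro i hi; have := hcr.mem i hi; rwa [lab] at this
  have Rbmax : ∀ i (hi : i < b.length), ∀ u ∈ S \ (b.take i).toFinset,
      hval C Sc nA τ n u (b.take i).toFinset
        ≤ hval C Sc nA τ n (b.get ⟨i, hi⟩) (b.take i).toFinset := by
    intro i hi u hu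
    have := hcr.maximal i hi u (by rwa [lab])
    rwa [lab, bridgeJ, bridgeJ] at this
  have Rbstop : ∀ u ∈ S \ Lc, hval C Sc nA τ n u Lc < γ / ((J:ℝ) * (n:ℝ)) := by
    intro u hu
    have := hcr.stopped u (by rwa [lablen])
    rwa [lablen, bridgeJ, hcardJ] at this
  have hθ : γ / ((J:ℝ) * (n:ℝ)) ≤ γ / (n:ℝ) := by
    apply div_le_div_of_nonneg_left (le_of_lt hγ) hnR
    nlinarith
  -- G ⊆ Lc via greedy comparison
  have hGsub : G ⊆ Lc := by
    rw [hGfin]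
    exact greedy_compare hSdef (fun v L => hval C Sc nA τ n v L)
      (fun c v L L' hv hLL' => by
        show hval C Sc nA τ n v L = hval C Sc nA τ n v L'
        rw [hval_class nA τ n hdisjS hv L, hval_class nA τ n hdisjS hv L', hLL'])
      hinj (γ / (n:ℝ)) (γ / ((J:ℝ) * (n:ℝ))) hθ (usw 1) b
      Ramem Rathresh Ramax Rbmem Rbmax Rbstop
  have hγJδ : γ / ((J:ℝ) * (n:ℝ)) < δ := by
    rw [div_lt_iff₀ (by positivity)]
    have h2 : γ < (J:ℝ) * (δ * (n:ℝ)) := (div_lt_iff₀ (by positivity)).mp hJR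
    nlinarith
  -- existence of a flipped cell
  have hwit : ∃ c₁, ∃ A₁ ∈ (Sc c₁).powerset,
      (A₁ ∩ G).card < τ ∧ ¬ (A₁ ∩ Lc).card < τ := by
    by_cases hv₀L : v₀ ∈ Lc
    · by_cases hq : τ ≤ (Lc ∩ Sc c₀).card
      · obtain ⟨A', hA'sub, hA'card⟩ :=
          Finset.exists_subset_card_eq (s := (Lc ∩ Sc c₀).erase v₀) (n := τ - 1)
            (by
              rw [Finset.card_erase_of_mem (Finset.mem_inter.mpr ⟨hv₀L, hv₀c⟩)]
              omega)
        have hv₀A' : v₀ ∉ A' := fun hmem => (Finset.notMem_erase v₀ _) (hA'sub hmem)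
        refine ⟨c₀, insert v₀ A', ?_, ?_, ?_⟩
        · rw [Finset.mem_powerset, Finset.insert_subset_iff]
          exact ⟨hv₀c, hA'sub.trans ((Finset.erase_subset _ _).trans
            Finset.inter_subset_right)⟩
        · have hsub : insert v₀ A' ∩ G ⊆ A' := by
            intro z hz
            obtain ⟨hz1, hz2⟩ := Finset.mem_inter.mp hz
            rcases Finset.mem_insert.mp hz1 with rfl | hz3
            · exact absurd hz2 hv₀G
            · exact hz3
          calc (insert v₀ A' ∩ G).card ≤ A'.card := Finset.card_le_card hsub
          _ = τ - 1 := hA'card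
          _ < τ := by omega
        · have hsub2 : insert v₀ A' ⊆ Lc :=
            Finset.insert_subset hv₀L (hA'sub.trans ((Finset.erase_subset _ _).trans
              Finset.inter_subset_left))
          rw [Finset.inter_eq_left.mpr hsub2, Finset.card_insert_of_notMem hv₀A',
            hA'card]
          omega
      · exfalso
        push_neg at hq
        obtain ⟨v, vinj, vmem, hv12⟩ := hii c₀
        obtain ⟨hfreq, -⟩ := hv12 1 le_rfl
        have hfree : ∀ i : Fin τ, (i:ℕ) + 1 < τ → γ / (n:ℝ) ≤ hval C Sc nA τ n (v i) ∅ := by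
          intro i hilt
          have := hfreq i hilt
          rwa [gval_chunk_eq hfeats hcount hchunkcard hτpos 1 le_rfl] at this
        have hvLc : ∀ i : Fin τ, (i:ℕ) + 1 < τ → v i ∈ Lc := by
          intro i hilt
          by_contra hvi
          have hviS : v i ∈ S := hSdef ▸ Finset.mem_biUnion.mpr ⟨c₀, mem_univ _, vmem i⟩
          have h1 := Rbstop (v i) (Finset.mem_sdiff.mpr ⟨hviS, hvi⟩)
          have h2 : hval C Sc nA τ n (v i) Lc = hval C Sc nA τ n (v i) ∅ := by
            rw [hval_class nA τ n hdisjS (vmem i) Lc, hval_small nA n hτpos _ hq]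
          rw [h2] at h1
          have h3 := hfree i hilt
          linarith
        have hq1 : τ - 1 ≤ (Lc ∩ Sc c₀).card := by
          have hmaps : ∀ k : Fin (τ-1), v (Fin.castLE (by omega) k) ∈ Lc ∩ Sc c₀ := by
            intro k
            refine Finset.mem_inter.mpr ⟨hvLc _ ?_, vmem _⟩
            simp [Fin.castLE]
            omega
          calc τ - 1 = (Finset.univ : Finset (Fin (τ-1))).card := by simp
          _ ≤ (Lc ∩ Sc c₀).card := by
            apply Finset.card_le_card_of_injOn
              (fun k : Fin (τ-1) => v (Fin.castLE (by omega) k))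
              (fun k _ => hmaps k)
            intro k _ k' _ hkk
            exact Fin.castLE_injective _ (vinj hkk)
        have hGsubc : G ∩ Sc c₀ ⊆ Lc ∩ Sc c₀ :=
          Finset.inter_subset_inter hGsub Finset.Subset.rfl
        have hp : (G ∩ Sc c₀).card < τ :=
          lt_of_le_of_lt (Finset.card_le_card hGsubc) hq
        have hvG : ∀ i : Fin τ, (i:ℕ) + 1 < τ → v i ∈ G := by
          intro i hilt
          by_contra hvi
          have hviS : v i ∈ S := hSdef ▸ Finset.mem_biUnion.mpr ⟨c₀, mem_univ _, vmem i⟩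
          have h1 := H1 (v i) (Finset.mem_sdiff.mpr ⟨hviS, hvi⟩)
          have h2 : hval C Sc nA τ n (v i) G = hval C Sc nA τ n (v i) ∅ := by
            rw [hval_class nA τ n hdisjS (vmem i) G, hval_small nA n hτpos _ hp]
          rw [h2] at h1
          have h3 := hfree i hilt
          linarith
        have hp1 : τ - 1 ≤ (G ∩ Sc c₀).card := by
          have hmaps : ∀ k : Fin (τ-1), v (Fin.castLE (by omega) k) ∈ G ∩ Sc c₀ := by
            intro k
            refine Finset.mem_inter.mpr ⟨hvG _ ?_, vmem _⟩
            simp [Fin.castLE]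
            omega
          calc τ - 1 = (Finset.univ : Finset (Fin (τ-1))).card := by simp
          _ ≤ (G ∩ Sc c₀).card := by
            apply Finset.card_le_card_of_injOn
              (fun k : Fin (τ-1) => v (Fin.castLE (by omega) k))
              (fun k _ => hmaps k)
            intro k _ k' _ hkk
            exact Fin.castLE_injective _ (vinj hkk)
        have heqc : G ∩ Sc c₀ = Lc ∩ Sc c₀ :=
          Finset.eq_of_subset_of_card_le hGsubc (by omega)
        have : v₀ ∈ G :=
          (Finset.mem_inter.mp (heqc ▸ Finset.mem_inter.mpr ⟨hv₀L, hv₀c⟩)).1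
        exact hv₀G this
    · -- v₀ not learned by the cold run: a cell must have flipped
      have h1 := Rbstop v₀ (Finset.mem_sdiff.mpr ⟨hv₀Smem, hv₀L⟩)
      have h2 : hval C Sc nA τ n v₀ Lc < hval C Sc nA τ n v₀ G := by
        rw [hv₀δ]; linarith
      by_contra hno
      push_neg at hno
      have hmono : hval C Sc nA τ n v₀ G ≤ hval C Sc nA τ n v₀ Lc := by
        unfold hval
        apply mul_le_mul_of_nonneg_left ?_ (by positivity)
        apply Finset.sum_le_sum
        intro c _
        apply Finset.sum_le_sum
        intro A hA
        apply mul_le_mul_of_nonneg_left ?_ (by positivity)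
        split_ifs with hGc hLcc hLcc
        · exact le_rfl
        · exact absurd (hno c A hA hGc.2) (fun hh => hLcc ⟨hGc.1, hh⟩)
        · norm_num
        · exact le_rfl
      linarith
  -- conclude via the counts
  obtain ⟨c₁, A₁, hA₁pow, hA₁G, hA₁Lc⟩ := hwit
  have hmonocnt : ∀ c, ∀ A ∈ (Sc c).powerset,
      nA c A * (if (A ∩ Lc).card < τ then 1 else 0)
        ≤ nA c A * (if (A ∩ G).card < τ then 1 else 0) := by
    intro c A hA
    split_ifs with h1 h2 h2
    · exact le_rfl
    · exact absurd (lt_of_le_of_lt (Finset.card_le_card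
        (Finset.inter_subset_inter Finset.Subset.rfl hGsub)) h1) h2
    · simp
    · exact le_rfl
  have hstrict : cnt C Sc nA (fun c A => (A ∩ Lc).card < τ)
      < cnt C Sc nA (fun c A => (A ∩ G).card < τ) := by
    unfold cnt
    apply Finset.sum_lt_sum
    · intro c _
      exact Finset.sum_le_sum (fun A hA => hmonocnt c A hA)
    · refine ⟨c₁, mem_univ _, ?_⟩
      apply Finset.sum_lt_sum
      · intro A hA
        exact hmonocnt c₁ A hA
      · refine ⟨A₁, hA₁pow, ?_⟩
        rw [if_pos hA₁G, if_neg hA₁Lc, mul_one, mul_zero]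
        exact hnA c₁ A₁ hA₁pow
  rw [hLJ]
  rw [ACC_cnt, ACC_cnt]
  have hCpos : (0:ℝ) < (C:ℝ) := by exact_mod_cast hC0
  have hC1 : (0:ℝ) < (C:ℝ) - 1 := by
    have : (1:ℝ) < (C:ℝ) := by exact_mod_cast hC
    linarith
  apply sub_lt_sub_left
  apply mul_lt_mul_of_pos_left ?_ (div_pos hC1 hCpos)
  apply (div_lt_div_iff_of_pos_right hnR).mpr
  exact_mod_cast hstrict
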